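/- Let Ŷ, A, Y be {0,1}-valued random variables with every event {Ŷ=ŷ, A=a, Y=y} of positive probability, and let Ỹ be a {0,1}-valued random variable such that P(Ỹ=1 | Ŷ=ŷ, A=a, Y=y) = p_{ŷ,a} for all y ∈ {0,1}, where p_{ŷ,a} ∈ [0,1] are four parameters (this encodes that Ỹ is a possibly randomized function of (Ŷ, A) alone). Then for each a ∈ {0,1} and y ∈ {0,1}: P(Ỹ=1 | A=a, Y=y) = p_{1,a}·P(Ŷ=1 | A=a, Y=y) + p_{0,a}·(1 − P(Ŷ=1 | A=a, Y=y)); consequently γ_a(Ỹ) = p_{1,a}·γ_a(Ŷ) + p_{0,a}·((1,1) − γ_a(Ŷ)), which lies in the convex hull of the four points (0,0), γ_a(Ŷ), (1,1) − γ_a(Ŷ), and (1,1) in ℝ². -/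

import Mathlib

open MeasureTheory ProbabilityTheory
open scoped ENNReal

private lemma smul_add_mem_convexHull_aux {x y : ℝ × ℝ} {a b : ℝ}
    (ha : a ∈ Set.Icc (0:ℝ) 1) (hb : b ∈ Set.Icc (0:ℝ) 1) :
    a • x + b • y ∈ convexHull ℝ ({0, x, y, x + y} : Set (ℝ × ℝ)) := by
  set S : Set (ℝ × ℝ) := {0, x, y, x + y} with hS
  have h0 : (0 : ℝ×ℝ) ∈ convexHull ℝ S := subset_convexHull _ _ (by simp [hS])
  have hx : x ∈ convexHull ℝ S := subset_convexHull _ _ (by simp [hS])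
  have hy : y ∈ convexHull ℝ S := subset_convexHull _ _ (by simp [hS])
  have hxy : x + y ∈ convexHull ℝ S := subset_convexHull _ _ (by simp [hS])
  have hc := convex_convexHull ℝ S
  have h1 : a • x ∈ convexHull ℝ S := by
    have := hc hx h0 (a := a) (b := 1 - a) ha.1 (by linarith [ha.2]) (by ring)
    simpa using this
  have h2 : a • x + y ∈ convexHull ℝ S := by
    have := hc hxy hy (a := a) (b := 1 - a) ha.1 (by linarith [ha.2]) (by ring)
    convert this using 1
    module
  have := hc h2 h1 (a := b) (b := 1 - b) hb.1 (by linarith [hb.2]) (by ring)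
  convert this using 1
  module

private lemma derived_rate_aux {Ω : Type*} [MeasurableSpace Ω] (μ : Measure Ω)
    [IsProbabilityMeasure μ] (Yh A Y Yt : Ω → Bool)
    (hYh : Measurable Yh) (hA : Measurable A) (hY : Measurable Y) (hYt : Measurable Yt)
    (hpos : ∀ yh a y : Bool, μ {ω | Yh ω = yh ∧ A ω = a ∧ Y ω = y} ≠ 0)
    (p : Bool → Bool → ℝ)
    (hder : ∀ yh a y : Bool,
      (μ[|{ω | Yh ω = yh ∧ A ω = a ∧ Y ω = y}] {ω | Yt ω = true}).toReal = p yh a)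
    (a y : Bool) :
        (μ[|{ω | A ω = a ∧ Y ω = y}] {ω | Yt ω = true}).toReal =
          p true a * (μ[|{ω | A ω = a ∧ Y ω = y}] {ω | Yh ω = true}).toReal +
            p false a * (1 - (μ[|{ω | A ω = a ∧ Y ω = y}] {ω | Yh ω = true}).toReal) := by
  set B : Set Ω := {ω | A ω = a ∧ Y ω = y} with hB
  set B1 : Set Ω := {ω | Yh ω = true ∧ A ω = a ∧ Y ω = y} with hB1
  set B0 : Set Ω := {ω | Yh ω = false ∧ A ω = a ∧ Y ω = y} with hB0
  set T : Set Ω := {ω | Yt ω = true} with hT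
  have hmB1 : MeasurableSet B1 := by
    have : B1 = Yh ⁻¹' {true} ∩ (A ⁻¹' {a} ∩ Y ⁻¹' {y}) := by ext ω; exact Iff.rfl
    rw [this]
    exact (hYh (measurableSet_singleton _)).inter
      ((hA (measurableSet_singleton _)).inter (hY (measurableSet_singleton _)))
  have hmB0 : MeasurableSet B0 := by
    have : B0 = Yh ⁻¹' {false} ∩ (A ⁻¹' {a} ∩ Y ⁻¹' {y}) := by ext ω; exact Iff.rfl
    rw [this]
    exact (hYh (measurableSet_singleton _)).inter
      ((hA (measurableSet_singleton _)).inter (hY (measurableSet_singleton _)))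
  have hmB : MeasurableSet B := by
    have : B = A ⁻¹' {a} ∩ Y ⁻¹' {y} := by ext ω; exact Iff.rfl
    rw [this]
    exact (hA (measurableSet_singleton _)).inter (hY (measurableSet_singleton _))
  have hsplit : ∀ S : Set Ω, MeasurableSet S → μ (B ∩ S) = μ (B1 ∩ S) + μ (B0 ∩ S) := by
    intro S hS
    have hU : B ∩ S = (B1 ∩ S) ∪ (B0 ∩ S) := by
      ext ω
      simp only [hB, hB1, hB0, Set.mem_inter_iff, Set.mem_union, Set.mem_setOf_eq]
      cases h : Yh ω <;> tauto
    have hd : Disjoint (B1 ∩ S) (B0 ∩ S) := by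
      refine Set.disjoint_left.2 ?_
      rintro ω ⟨⟨h1, -⟩, -⟩ ⟨⟨h0, -⟩, -⟩
      simp [h1] at h0
    rw [hU, measure_union hd (hmB0.inter hS)]
  have hfin : ∀ s : Set Ω, μ s ≠ ⊤ := fun s => measure_ne_top μ s
  have hBne : (μ B).toReal ≠ 0 := by
    have : μ B ≠ 0 := by
      intro h
      exact hpos true a y (measure_mono_null
        (by intro ω; simp only [hB1, hB, Set.mem_setOf_eq]; tauto) h)
    simp [ENNReal.toReal_eq_zero_iff, this, hfin]
  have hder' : ∀ yh : Bool, (μ ({ω | Yh ω = yh ∧ A ω = a ∧ Y ω = y} ∩ T)).toReal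
      = p yh a * (μ {ω | Yh ω = yh ∧ A ω = a ∧ Y ω = y}).toReal := by
    intro yh
    have hm : MeasurableSet {ω | Yh ω = yh ∧ A ω = a ∧ Y ω = y} := by
      have : {ω | Yh ω = yh ∧ A ω = a ∧ Y ω = y} = Yh ⁻¹' {yh} ∩ (A ⁻¹' {a} ∩ Y ⁻¹' {y}) := by
        ext ω; exact Iff.rfl
      rw [this]
      exact (hYh (measurableSet_singleton _)).inter
        ((hA (measurableSet_singleton _)).inter (hY (measurableSet_singleton _)))
    have h := hder yh a y
    rw [cond_apply hm] at h
    rw [ENNReal.toReal_mul, ENNReal.toReal_inv] at h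
    have hne : (μ {ω | Yh ω = yh ∧ A ω = a ∧ Y ω = y}).toReal ≠ 0 := by
      simp [ENNReal.toReal_eq_zero_iff, hpos yh a y, hfin]
    field_simp at h
    linarith [h]
  have e1 : (μ[|B] T).toReal = (μ (B ∩ T)).toReal / (μ B).toReal := by
    rw [cond_apply hmB, ENNReal.toReal_mul, ENNReal.toReal_inv]
    ring
  have e2 : (μ[|B] {ω | Yh ω = true}).toReal = (μ B1).toReal / (μ B).toReal := by
    have hBH : B ∩ {ω | Yh ω = true} = B1 := by
      ext ω; simp only [hB, hB1, Set.mem_inter_iff, Set.mem_setOf_eq]; tauto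
    rw [cond_apply hmB, hBH, ENNReal.toReal_mul, ENNReal.toReal_inv]
    ring
  have e3 : (μ (B ∩ T)).toReal = p true a * (μ B1).toReal + p false a * (μ B0).toReal := by
    rw [hsplit T (hYt (measurableSet_singleton true)), ENNReal.toReal_add (hfin _) (hfin _),
      hder' true, hder' false]
  have e4 : (μ B).toReal = (μ B1).toReal + (μ B0).toReal := by
    have := hsplit Set.univ MeasurableSet.univ
    simp only [Set.inter_univ] at this
    rw [this, ENNReal.toReal_add (hfin _) (hfin _)]
  have e5 : (1:ℝ) - (μ B1).toReal / (μ B).toReal = (μ B0).toReal / (μ B).toReal := by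
    field_simp
    linarith [e4]
  rw [e1, e2, e3, e5]
  ring

/-- If `Ỹ` is a derived predictor with parameters
`p ŷ a = P(Ỹ=1 ∣ Ŷ=ŷ, A=a, Y=y)` (independent of `y`), then its group-conditional
rates satisfy
`P(Ỹ=1 ∣ A=a, Y=y) = p 1 a · P(Ŷ=1 ∣ A=a, Y=y) + p 0 a · (1 − P(Ŷ=1 ∣ A=a, Y=y))`,
hence `γ_a(Ỹ) = p 1 a • γ_a(Ŷ) + p 0 a • ((1,1) − γ_a(Ŷ))`, which lies in the convex
hull of `(0,0)`, `γ_a(Ŷ)`, `(1,1) − γ_a(Ŷ)` and `(1,1)`. -/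
theorem derived_predictor_rates_mem_convexHull
    {Ω : Type*} [MeasurableSpace Ω] (μ : Measure Ω) [IsProbabilityMeasure μ]
    (Yh A Y Yt : Ω → Bool)
    (hYh : Measurable Yh) (hA : Measurable A) (hY : Measurable Y) (hYt : Measurable Yt)
    (hpos : ∀ yh a y : Bool, μ {ω | Yh ω = yh ∧ A ω = a ∧ Y ω = y} ≠ 0)
    (p : Bool → Bool → ℝ) (hp : ∀ yh a : Bool, p yh a ∈ Set.Icc (0:ℝ) 1)
    (hder : ∀ yh a y : Bool,
      (μ[|{ω | Yh ω = yh ∧ A ω = a ∧ Y ω = y}] {ω | Yt ω = true}).toReal = p yh a) :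
    ∀ a : Bool,
      (∀ y : Bool,
        (μ[|{ω | A ω = a ∧ Y ω = y}] {ω | Yt ω = true}).toReal =
          p true a * (μ[|{ω | A ω = a ∧ Y ω = y}] {ω | Yh ω = true}).toReal +
            p false a * (1 - (μ[|{ω | A ω = a ∧ Y ω = y}] {ω | Yh ω = true}).toReal)) ∧
      ((((μ[|{ω | A ω = a ∧ Y ω = false}] {ω | Yt ω = true}).toReal,
          (μ[|{ω | A ω = a ∧ Y ω = true}] {ω | Yt ω = true}).toReal) : ℝ × ℝ) =
        p true a • (((μ[|{ω | A ω = a ∧ Y ω = false}] {ω | Yh ω = true}).toReal,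
            (μ[|{ω | A ω = a ∧ Y ω = true}] {ω | Yh ω = true}).toReal) : ℝ × ℝ) +
          p false a • (((1:ℝ),(1:ℝ)) -
            (((μ[|{ω | A ω = a ∧ Y ω = false}] {ω | Yh ω = true}).toReal,
              (μ[|{ω | A ω = a ∧ Y ω = true}] {ω | Yh ω = true}).toReal) : ℝ × ℝ))) ∧
      ((((μ[|{ω | A ω = a ∧ Y ω = false}] {ω | Yt ω = true}).toReal,
          (μ[|{ω | A ω = a ∧ Y ω = true}] {ω | Yt ω = true}).toReal) : ℝ × ℝ) ∈
        convexHull ℝ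
          ({((0:ℝ),(0:ℝ)),
            (((μ[|{ω | A ω = a ∧ Y ω = false}] {ω | Yh ω = true}).toReal,
              (μ[|{ω | A ω = a ∧ Y ω = true}] {ω | Yh ω = true}).toReal) : ℝ × ℝ),
            (((1:ℝ),(1:ℝ)) -
              (((μ[|{ω | A ω = a ∧ Y ω = false}] {ω | Yh ω = true}).toReal,
                (μ[|{ω | A ω = a ∧ Y ω = true}] {ω | Yh ω = true}).toReal) : ℝ × ℝ)),
            ((1:ℝ),(1:ℝ))} : Set (ℝ × ℝ))) := by
  intro a
  have key := derived_rate_aux μ Yh A Y Yt hYh hA hY hYt hpos p hder a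
  set γf : ℝ := (μ[|{ω | A ω = a ∧ Y ω = false}] {ω | Yh ω = true}).toReal with hγf
  set γt : ℝ := (μ[|{ω | A ω = a ∧ Y ω = true}] {ω | Yh ω = true}).toReal with hγt
  have h2 : (((μ[|{ω | A ω = a ∧ Y ω = false}] {ω | Yt ω = true}).toReal,
          (μ[|{ω | A ω = a ∧ Y ω = true}] {ω | Yt ω = true}).toReal) : ℝ × ℝ) =
        p true a • ((γf, γt) : ℝ × ℝ) +
          p false a • (((1:ℝ),(1:ℝ)) - ((γf, γt) : ℝ × ℝ)) := by
    rw [key false, key true]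
    simp [Prod.ext_iff, Prod.smul_mk, hγf, hγt]
  refine ⟨key, h2, ?_⟩
  rw [h2]
  have hset : ({((0:ℝ),(0:ℝ)), ((γf, γt) : ℝ × ℝ),
      (((1:ℝ),(1:ℝ)) - ((γf, γt) : ℝ × ℝ)), ((1:ℝ),(1:ℝ))} : Set (ℝ × ℝ)) =
      {0, ((γf, γt) : ℝ × ℝ), (((1:ℝ),(1:ℝ)) - ((γf, γt) : ℝ × ℝ)),
        ((γf, γt) : ℝ × ℝ) + (((1:ℝ),(1:ℝ)) - ((γf, γt) : ℝ × ℝ))} := by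
    rw [show ((γf, γt) : ℝ × ℝ) + (((1:ℝ),(1:ℝ)) - ((γf, γt) : ℝ × ℝ)) = ((1:ℝ),(1:ℝ)) by abel]
    rfl
  rw [hset]
  exact smul_add_mem_convexHull_aux (hp true a) (hp false a)
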